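/- Let n, j be integers with 2 ≤ j ≤ n, and for each natural number k ≠ 1 set a_k = −(π^{(n−j)/2}·(j−1)/4) · Γ((n−j+2)/2) · Γ((k−1)/2) · Γ((j+k−1)/2) / (Γ((n−j+k+1)/2) · Γ((n+k+1)/2)). Then a_0 > 0, a_k < 0 for every k ≥ 2 (in particular a_k ≠ 0 for all k ≠ 1), and the sequence (a_k) is bounded: there exists C > 0 with |a_k| ≤ C for all k ≠ 1. -/
import Mathlib


/-- The closed-form multiplier `a_k^n[g_j]` of the integral transform `F_{g_j}` given by
C. Berg's function `g_j`. -/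
noncomputable def bergMult (n j k : ℕ) : ℝ :=
  -(Real.pi ^ (((n : ℝ) - (j : ℝ)) / 2) * ((j : ℝ) - 1) / 4) *
    Real.Gamma (((n : ℝ) - (j : ℝ) + 2) / 2) * Real.Gamma (((k : ℝ) - 1) / 2) *
    Real.Gamma (((j : ℝ) + (k : ℝ) - 1) / 2) /
    (Real.Gamma (((n : ℝ) - (j : ℝ) + (k : ℝ) + 1) / 2) *
      Real.Gamma (((n : ℝ) + (k : ℝ) + 1) / 2))

/-- For `x ≥ 1/2` and `d ≥ 1`, `Γ(x) ≤ (1+2d)(1+d) Γ(x+d)`. -/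
lemma gamma_ratio_bound (x d : ℝ) (hx : 1/2 ≤ x) (hd : 1 ≤ d) :
    Real.Gamma x ≤ (1 + 2*d) * (1 + d) * Real.Gamma (x + d) := by
  have hx0 : 0 < x := by linarith
  have hu : 0 < x + d := by linarith
  have h1 : Real.Gamma (x + 1) = x * Real.Gamma x := Real.Gamma_add_one hx0.ne'
  have h2 : Real.Gamma (x + 1 + 1) = (x + 1) * Real.Gamma (x + 1) :=
    Real.Gamma_add_one (by linarith)
  have h3 : Real.Gamma (x + d + 1) = (x + d) * Real.Gamma (x + d) :=
    Real.Gamma_add_one hu.ne'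
  have h4 : Real.Gamma (x + d + 1 + 1) = (x + d + 1) * Real.Gamma (x + d + 1) :=
    Real.Gamma_add_one (by linarith)
  have mono : Real.Gamma (x + 1 + 1) ≤ Real.Gamma (x + d + 1 + 1) :=
    Real.Gamma_strictMonoOn_Ici.monotoneOn (by simp only [Set.mem_Ici]; linarith)
      (by simp only [Set.mem_Ici]; linarith) (by linarith)
  have hGx : 0 < Real.Gamma x := Real.Gamma_pos_of_pos hx0
  have hGu : 0 < Real.Gamma (x + d) := Real.Gamma_pos_of_pos hu
  -- From the above: x(x+1)Γ(x) ≤ (x+d)(x+d+1)Γ(x+d) ≤ (1+2d)x(1+d)(x+1)Γ(x+d).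
  have hd0 : (0:ℝ) ≤ d := by linarith
  nlinarith [mul_pos hx0 (by linarith : (0:ℝ) < x + 1), sq_nonneg d, mul_nonneg hd0 hGu.le,
    mul_nonneg (mul_nonneg hd0 hd0) hGu.le, mul_nonneg (mul_nonneg hd0 hx0.le) hGu.le,
    mul_nonneg (mul_nonneg (mul_nonneg hd0 hd0) hx0.le) hGu.le,
    mul_nonneg (mul_nonneg (mul_nonneg hd0 hx0.le) hx0.le) hGu.le]

/-- for `2 ≤ j ≤ n`, the multipliers `a_k = a_k^n[g_j]` satisfy `a_0 > 0`,
`a_k < 0` for `k ≥ 2` (in particular `a_k ≠ 0` for `k ≠ 1`), and are bounded. -/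
theorem bergMult_sign_and_bounded (n j : ℕ) (hj : 2 ≤ j) (hn : j ≤ n) :
    0 < bergMult n j 0 ∧
    (∀ k : ℕ, 2 ≤ k → bergMult n j k < 0) ∧
    ∃ C : ℝ, 0 < C ∧ ∀ k : ℕ, k ≠ 1 → |bergMult n j k| ≤ C := by
  have hjr : (2:ℝ) ≤ (j:ℝ) := by exact_mod_cast hj
  have hnr : (j:ℝ) ≤ (n:ℝ) := by exact_mod_cast hn
  have hP : 0 < Real.pi ^ (((n : ℝ) - (j : ℝ)) / 2) * ((j : ℝ) - 1) / 4 := by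
    apply div_pos (mul_pos (Real.rpow_pos_of_pos Real.pi_pos _) (by linarith)) (by norm_num)
  have hG1 : 0 < Real.Gamma (((n : ℝ) - (j : ℝ) + 2) / 2) :=
    Real.Gamma_pos_of_pos (by linarith)
  -- Γ(-1/2) < 0
  have hGneg : Real.Gamma (-(1/2) : ℝ) < 0 := by
    have h := Real.Gamma_add_one (s := (-(1/2) : ℝ)) (by norm_num)
    have h2 : Real.Gamma ((1:ℝ)/2) = Real.sqrt Real.pi := Real.Gamma_one_half_eq
    have hsp : 0 < Real.sqrt Real.pi := Real.sqrt_pos.mpr Real.pi_pos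
    have : Real.Gamma ((-(1/2) : ℝ) + 1) = Real.Gamma ((1:ℝ)/2) := by norm_num
    nlinarith [h, this, h2, hsp]
  have ha0 : 0 < bergMult n j 0 := by
    simp only [bergMult, Nat.cast_zero]
    have e1 : ((0:ℝ) - 1) / 2 = -(1/2) := by norm_num
    rw [e1]
    have hGa : 0 < Real.Gamma (((j:ℝ) + 0 - 1) / 2) := Real.Gamma_pos_of_pos (by linarith)
    have hGb : 0 < Real.Gamma (((n:ℝ) - (j:ℝ) + 0 + 1) / 2) := Real.Gamma_pos_of_pos (by linarith)
    have hGc : 0 < Real.Gamma (((n:ℝ) + 0 + 1) / 2) := Real.Gamma_pos_of_pos (by linarith)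
    apply div_pos _ (mul_pos hGb hGc)
    nlinarith [mul_pos (mul_pos (mul_pos hP hG1) hGa) (neg_pos.mpr hGneg)]
  have hneg : ∀ k : ℕ, 2 ≤ k → bergMult n j k < 0 := by
    intro k hk
    have hkr : (2:ℝ) ≤ (k:ℝ) := by exact_mod_cast hk
    simp only [bergMult]
    have hGa : 0 < Real.Gamma (((k:ℝ) - 1) / 2) := Real.Gamma_pos_of_pos (by linarith)
    have hGb : 0 < Real.Gamma (((j:ℝ) + (k:ℝ) - 1) / 2) := Real.Gamma_pos_of_pos (by linarith)
    have hGc : 0 < Real.Gamma (((n:ℝ) - (j:ℝ) + (k:ℝ) + 1) / 2) :=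
      Real.Gamma_pos_of_pos (by linarith)
    have hGd : 0 < Real.Gamma (((n:ℝ) + (k:ℝ) + 1) / 2) := Real.Gamma_pos_of_pos (by linarith)
    apply div_neg_of_neg_of_pos _ (mul_pos hGc hGd)
    nlinarith [mul_pos (mul_pos (mul_pos hP hG1) hGa) hGb]
  refine ⟨ha0, hneg, ?_⟩
  -- the fixed constant
  set d : ℝ := ((n:ℝ) - (j:ℝ) + 2) / 2 with hd_def
  have hd1 : 1 ≤ d := by rw [hd_def]; linarith
  set B : ℝ := (1 + 2*d) * (1 + d) with hB_def
  have hB : 0 < B := by rw [hB_def]; nlinarith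
  set A : ℝ := Real.pi ^ (((n : ℝ) - (j : ℝ)) / 2) * ((j : ℝ) - 1) / 4 *
      Real.Gamma (((n : ℝ) - (j : ℝ) + 2) / 2) with hA_def
  have hA : 0 < A := mul_pos hP hG1
  refine ⟨|bergMult n j 0| + A * B * B, by positivity, ?_⟩
  intro k hk1
  rcases Nat.eq_or_lt_of_le (Nat.zero_le k) with h0 | h0
  · rw [← h0]
    nlinarith [abs_nonneg (bergMult n j 0), mul_pos (mul_pos hA hB) hB]
  · have hk2 : 2 ≤ k := by omega
    have hkr : (2:ℝ) ≤ (k:ℝ) := by exact_mod_cast hk2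
    have habs : |bergMult n j k| = -bergMult n j k := abs_of_neg (hneg k hk2)
    rw [habs]
    have hxd : ((k:ℝ) - 1) / 2 + d = ((n:ℝ) - (j:ℝ) + (k:ℝ) + 1) / 2 := by
      rw [hd_def]; ring
    have hyd : ((j:ℝ) + (k:ℝ) - 1) / 2 + d = ((n:ℝ) + (k:ℝ) + 1) / 2 := by
      rw [hd_def]; ring
    have hbx : Real.Gamma (((k:ℝ) - 1) / 2) ≤
        B * Real.Gamma (((n:ℝ) - (j:ℝ) + (k:ℝ) + 1) / 2) := by
      have := gamma_ratio_bound (((k:ℝ) - 1) / 2) d (by linarith) hd1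
      rwa [hxd, ← hB_def] at this
    have hby : Real.Gamma (((j:ℝ) + (k:ℝ) - 1) / 2) ≤
        B * Real.Gamma (((n:ℝ) + (k:ℝ) + 1) / 2) := by
      have := gamma_ratio_bound (((j:ℝ) + (k:ℝ) - 1) / 2) d (by linarith) hd1
      rwa [hyd, ← hB_def] at this
    have hGa : 0 < Real.Gamma (((k:ℝ) - 1) / 2) := Real.Gamma_pos_of_pos (by linarith)
    have hGb : 0 < Real.Gamma (((j:ℝ) + (k:ℝ) - 1) / 2) := Real.Gamma_pos_of_pos (by linarith)
    have hGc : 0 < Real.Gamma (((n:ℝ) - (j:ℝ) + (k:ℝ) + 1) / 2) :=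
      Real.Gamma_pos_of_pos (by linarith)
    have hGd : 0 < Real.Gamma (((n:ℝ) + (k:ℝ) + 1) / 2) := Real.Gamma_pos_of_pos (by linarith)
    have key : -bergMult n j k ≤ A * B * B := by
      have hrw : -bergMult n j k =
          A * Real.Gamma (((k:ℝ) - 1) / 2) * Real.Gamma (((j:ℝ) + (k:ℝ) - 1) / 2) /
            (Real.Gamma (((n:ℝ) - (j:ℝ) + (k:ℝ) + 1) / 2) *
              Real.Gamma (((n:ℝ) + (k:ℝ) + 1) / 2)) := by
        simp only [bergMult, hA_def]; ring
      rw [hrw, div_le_iff₀ (mul_pos hGc hGd)]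
      have hprod : Real.Gamma (((k:ℝ) - 1) / 2) * Real.Gamma (((j:ℝ) + (k:ℝ) - 1) / 2) ≤
          (B * Real.Gamma (((n:ℝ) - (j:ℝ) + (k:ℝ) + 1) / 2)) *
            (B * Real.Gamma (((n:ℝ) + (k:ℝ) + 1) / 2)) :=
        mul_le_mul hbx hby hGb.le (by positivity)
      calc A * Real.Gamma (((k:ℝ) - 1) / 2) * Real.Gamma (((j:ℝ) + (k:ℝ) - 1) / 2)
          = A * (Real.Gamma (((k:ℝ) - 1) / 2) * Real.Gamma (((j:ℝ) + (k:ℝ) - 1) / 2)) := by ring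
        _ ≤ A * ((B * Real.Gamma (((n:ℝ) - (j:ℝ) + (k:ℝ) + 1) / 2)) *
              (B * Real.Gamma (((n:ℝ) + (k:ℝ) + 1) / 2))) := by
            exact mul_le_mul_of_nonneg_left hprod hA.le
        _ = A * B * B * (Real.Gamma (((n:ℝ) - (j:ℝ) + (k:ℝ) + 1) / 2) *
              Real.Gamma (((n:ℝ) + (k:ℝ) + 1) / 2)) := by ring
    linarith [key, abs_nonneg (bergMult n j 0)]
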